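/- arXiv:1507.08779 — 3 statements merged into one kernel-verified Lean document; each statement's English description precedes it below -/
import Mathlib

section
/- (Key lemma for filtration switching.) Let τ : Ω → (0,∞] be a random time on a probability space (Ω, 𝒢, Q), let F_t ⊆ 𝒢 be a sub-σ-algebra, and define G_t := F_t ∨ σ({τ ≤ s} : s ∈ [0,t]). Assume Q(τ > t | F_t) > 0 almost surely. Then for every integrable random variable X, almost surely E[1_{τ>t}·X | G_t] = 1_{τ>t} · E[1_{τ>t}·X | F_t] / E[1_{τ>t} | F_t]. In particular, for every G_t-measurable integrable X_t there exists an F_t-measurable X̃_t with 1_{τ>t}·X_t = 1_{τ>t}·X̃_t almost surely. -/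
open MeasureTheory
open scoped ENNReal

/-- Key lemma for filtration switching: with
`G_t = F_t ∨ σ({τ ≤ s} : s ∈ [0,t])` and `Q(τ > t | F_t) > 0` a.s.,
`E[1_{τ>t} X | G_t] = 1_{τ>t} E[1_{τ>t} X | F_t] / E[1_{τ>t} | F_t]` a.s.;
in particular every `G_t`-measurable integrable `X` agrees on `{τ > t}` with
some `F_t`-measurable `X̃`. -/
theorem stmt_13
    {Ω : Type*} {m0 : MeasurableSpace Ω} {Q : Measure Ω} [IsProbabilityMeasure Q]
    (t : ℝ) (ht : 0 < t)
    (τ : Ω → ℝ≥0∞) (hτmeas : Measurable τ) (hτpos : ∀ ω, 0 < τ ω)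
    (Ft : MeasurableSpace Ω) (hFt : Ft ≤ m0)
    (Gt : MeasurableSpace Ω)
    (hGt : Gt = Ft ⊔ MeasurableSpace.generateFrom
      {A | ∃ s : ℝ, 0 ≤ s ∧ s ≤ t ∧ A = {ω | τ ω ≤ ENNReal.ofReal s}})
    (hpos : ∀ᵐ ω ∂Q, 0 <
      (Q[Set.indicator {ω' | ENNReal.ofReal t < τ ω'} (fun _ => (1 : ℝ)) | Ft]) ω) :
    (∀ X : Ω → ℝ, Integrable X Q →
      Q[Set.indicator {ω' | ENNReal.ofReal t < τ ω'} X | Gt]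
        =ᵐ[Q] Set.indicator {ω' | ENNReal.ofReal t < τ ω'}
          (fun ω => (Q[Set.indicator {ω' | ENNReal.ofReal t < τ ω'} X | Ft]) ω /
            (Q[Set.indicator {ω' | ENNReal.ofReal t < τ ω'} (fun _ => (1 : ℝ)) | Ft]) ω))
    ∧ (∀ X : Ω → ℝ, Integrable X Q → StronglyMeasurable[Gt] X →
        ∃ X' : Ω → ℝ, StronglyMeasurable[Ft] X' ∧
          Set.indicator {ω' | ENNReal.ofReal t < τ ω'} X
            =ᵐ[Q] Set.indicator {ω' | ENNReal.ofReal t < τ ω'} X') := by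
  set A : Set Ω := {ω' | ENNReal.ofReal t < τ ω'} with hA_def
  have hA_m0 : MeasurableSet[m0] A := hτmeas measurableSet_Ioi
  have hIndInt : ∀ {f : Ω → ℝ} (s : Set Ω), Integrable f Q → MeasurableSet[m0] s →
      Integrable (s.indicator f) Q := fun {f} s hf hs =>
    hf.indicator hs
  have hIntInd : ∀ (f : Ω → ℝ) (s : Set Ω), MeasurableSet[m0] s →
      ∫ x, s.indicator f x ∂Q = ∫ x in s, f x ∂Q := fun f s hs =>
    @integral_indicator Ω ℝ m0 _ _ f s Q hs
  have hGt_le : Gt ≤ m0 := by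
    rw [hGt]
    refine sup_le hFt (MeasurableSpace.generateFrom_le ?_)
    rintro B ⟨s, hs0, hst, rfl⟩
    exact hτmeas measurableSet_Iic
  have hFt_le_Gt : Ft ≤ Gt := hGt ▸ le_sup_left
  have hA_Gt : MeasurableSet[Gt] A := by
    have h1 : MeasurableSet[Gt] {ω | τ ω ≤ ENNReal.ofReal t} := by
      rw [hGt]
      exact (le_sup_right : _ ≤ Ft ⊔ _) _
        (MeasurableSpace.measurableSet_generateFrom ⟨t, ht.le, le_rfl, rfl⟩)
    have h2 : A = {ω | τ ω ≤ ENNReal.ofReal t}ᶜ := by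
      ext ω; simp [hA_def, not_le]
    rw [h2]
    exact h1.compl
  -- structural lemma: every Gt-set agrees with an Ft-set on A
  have key : ∀ B : Set Ω, MeasurableSet[Gt] B →
      ∃ C : Set Ω, MeasurableSet[Ft] C ∧ B ∩ A = C ∩ A := by
    let m' : MeasurableSpace Ω :=
      { MeasurableSet' := fun B => ∃ C, MeasurableSet[Ft] C ∧ B ∩ A = C ∩ A
        measurableSet_empty := ⟨∅, (@MeasurableSet.empty Ω Ft), rfl⟩
        measurableSet_compl := by
          rintro B ⟨C, hC, hBC⟩
          refine ⟨Cᶜ, hC.compl, ?_⟩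
          ext ω
          have h := Set.ext_iff.1 hBC ω
          simp only [Set.mem_inter_iff, Set.mem_compl_iff] at h ⊢
          tauto
        measurableSet_iUnion := by
          intro f hf
          choose C hC hBC using hf
          refine ⟨⋃ n, C n, MeasurableSet.iUnion hC, ?_⟩
          rw [Set.iUnion_inter, Set.iUnion_inter]
          exact Set.iUnion_congr hBC }
    have hle : Gt ≤ m' := by
      rw [hGt]
      refine sup_le (fun B hB => ⟨B, hB, rfl⟩) (MeasurableSpace.generateFrom_le ?_)
      rintro B ⟨s, hs0, hst, rfl⟩
      refine ⟨∅, (@MeasurableSet.empty Ω Ft), ?_⟩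
      ext ω
      simp only [Set.mem_inter_iff, Set.mem_setOf_eq, Set.mem_empty_iff_false, iff_false,
        not_and, Set.empty_inter, hA_def]
      intro hle' hlt
      exact absurd (hle'.trans (ENNReal.ofReal_le_ofReal hst)) (not_le.2 hlt)
    exact fun B hB => hle B hB
  set ind : Ω → ℝ := A.indicator (fun _ => (1 : ℝ)) with hind_def
  set h : Ω → ℝ := Q[ind|Ft] with hh_def
  have hh_sm : StronglyMeasurable[Ft] h := stronglyMeasurable_condExp
  have hh_int : Integrable h Q := integrable_condExp
  have hone : Integrable (fun _ : Ω => (1 : ℝ)) Q := integrable_const 1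
  have hind_int : Integrable ind Q := hIndInt A hone hA_m0
  have hind_nonneg : ∀ ω, 0 ≤ ind ω := by
    intro ω
    by_cases hω : ω ∈ A <;>
      simp [hind_def, Set.indicator_of_mem, Set.indicator_of_notMem, hω]
  have hind_le_one : ∀ ω, ind ω ≤ 1 := by
    intro ω
    by_cases hω : ω ∈ A <;>
      simp [hind_def, Set.indicator_of_mem, Set.indicator_of_notMem, hω]
  -- pull-out computation for integrals
  have pull : ∀ f : Ω → ℝ, StronglyMeasurable[Ft] f → Integrable (f * ind) Q →
      ∫ ω, (f * ind) ω ∂Q = ∫ ω, f ω * h ω ∂Q := by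
    intro f hf hfi
    have h1 : Q[f * ind|Ft] =ᵐ[Q] f * Q[ind|Ft] :=
      condExp_mul_of_stronglyMeasurable_left hf hfi hind_int
    calc ∫ ω, (f * ind) ω ∂Q = ∫ ω, (Q[f * ind|Ft]) ω ∂Q := (integral_condExp hFt).symm
      _ = ∫ ω, f ω * h ω ∂Q := integral_congr_ae h1
  -- part 1
  have part1 : ∀ X : Ω → ℝ, Integrable X Q →
      Q[A.indicator X|Gt] =ᵐ[Q] A.indicator (fun ω => (Q[A.indicator X|Ft]) ω / h ω) := by
    intro X hX
    set g : Ω → ℝ := Q[A.indicator X|Ft] with hg_def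
    set r : Ω → ℝ := fun ω => g ω / h ω with hr_def
    have hg_sm : StronglyMeasurable[Ft] g := stronglyMeasurable_condExp
    have hg_int : Integrable g Q := integrable_condExp
    have hIX : Integrable (A.indicator X) Q := hIndInt A hX hA_m0
    have hr_m : Measurable[Ft] r := hg_sm.measurable.div hh_sm.measurable
    have hr_sm : StronglyMeasurable[Ft] r := hr_m.stronglyMeasurable
    set k : Ω → ℝ := fun ω => ‖g ω‖ / ‖h ω‖ with hk_def
    have hk_m : Measurable[Ft] k := hg_sm.norm.measurable.div hh_sm.norm.measurable
    have hk_nonneg : ∀ ω, 0 ≤ k ω := fun ω => div_nonneg (norm_nonneg _) (norm_nonneg _)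
    have habs_r : ∀ ω, ‖r ω‖ = k ω := fun ω => norm_div _ _
    have hkmin_m : ∀ n : ℕ, Measurable[Ft] fun ω => min (k ω) (n : ℝ) := fun n =>
      hk_m.min (@measurable_const ℝ Ω _ Ft (n : ℝ))
    have hind_m : Measurable[m0] ind :=
      (@measurable_const ℝ Ω _ m0 (1 : ℝ)).indicator hA_m0
    -- the truncations
    set Zn : ℕ → Ω → ℝ := fun n ω => min (k ω) n * ind ω with hZn_def
    have hZn_nonneg : ∀ n ω, 0 ≤ Zn n ω := fun n ω =>
      mul_nonneg (le_min (hk_nonneg ω) (Nat.cast_nonneg n)) (hind_nonneg ω)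
    have hZn_le : ∀ n ω, Zn n ω ≤ n := fun n ω =>
      (mul_le_of_le_one_right (le_min (hk_nonneg ω) (Nat.cast_nonneg n)) (hind_le_one ω)).trans
        (min_le_right _ _)
    have hZn_m : ∀ n, Measurable[m0] (Zn n) := fun n =>
      (((hkmin_m n).mono hFt le_rfl).mul hind_m)
    have hZn_int : ∀ n, Integrable (Zn n) Q := by
      intro n
      refine Integrable.mono' (integrable_const (n : ℝ))
        (hZn_m n).stronglyMeasurable.aestronglyMeasurable ?_
      exact Filter.Eventually.of_forall fun ω => by
        rw [Real.norm_eq_abs, abs_of_nonneg (hZn_nonneg n ω)]; exact hZn_le n ω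
    have hZn_integral_le : ∀ n, ∫ ω, Zn n ω ∂Q ≤ ∫ ω, ‖g ω‖ ∂Q := by
      intro n
      have hfmul : Integrable ((fun ω => min (k ω) (n : ℝ)) * ind) Q := by
        have heq : (fun ω => min (k ω) (n : ℝ)) * ind = Zn n := by
          funext ω; simp [hZn_def]
        rw [heq]; exact hZn_int n
      have h1 : ∫ ω, Zn n ω ∂Q = ∫ ω, min (k ω) (n : ℝ) * h ω ∂Q :=
        pull (fun ω => min (k ω) (n : ℝ)) (hkmin_m n).stronglyMeasurable hfmul
      rw [h1]
      have hint1 : Integrable (fun ω => min (k ω) (n : ℝ) * h ω) Q := by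
        have hb : ∀ ω, ‖min (k ω) (n : ℝ)‖ ≤ (n : ℝ) := fun ω => by
          rw [Real.norm_eq_abs, abs_of_nonneg (le_min (hk_nonneg ω) (Nat.cast_nonneg n))]
          exact min_le_right _ _
        exact hh_int.bdd_mul
          (((hkmin_m n).mono hFt le_rfl).stronglyMeasurable.aestronglyMeasurable)
          (Filter.Eventually.of_forall hb)
      refine integral_mono_ae hint1 hg_int.norm ?_
      filter_upwards [hpos] with ω hω
      have hhω : 0 < h ω := hω
      have habs : ‖h ω‖ = h ω := Real.norm_of_nonneg hhω.le
      calc min (k ω) (n : ℝ) * h ω ≤ k ω * h ω :=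
            mul_le_mul_of_nonneg_right (min_le_left _ _) hhω.le
        _ = ‖g ω‖ := by rw [hk_def]; simp only [habs]; exact div_mul_cancel₀ _ hhω.ne'
    -- integrability of the candidate
    have hY_sm : StronglyMeasurable[Gt] (A.indicator r) := (hr_sm.mono hFt_le_Gt).indicator hA_Gt
    have hY_aesm : @AEStronglyMeasurable Ω ℝ _ m0 m0 (A.indicator r) Q :=
      (hY_sm.mono hGt_le).aestronglyMeasurable
    have hpt : ∀ ω, (‖A.indicator r ω‖₊ : ℝ≥0∞) = ⨆ n : ℕ, ENNReal.ofReal (Zn n ω) := by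
      intro ω
      by_cases hω : ω ∈ A
      · rw [Set.indicator_of_mem hω]
        have hZ : ∀ n : ℕ, Zn n ω = min (k ω) n := by
          intro n; simp [hZn_def, hind_def, Set.indicator_of_mem hω]
        simp_rw [hZ]
        rw [← enorm_eq_nnnorm, ← ofReal_norm, habs_r]
        refine le_antisymm ?_ (iSup_le fun n => ENNReal.ofReal_le_ofReal (min_le_left _ _))
        refine le_iSup_of_le ⌈k ω⌉₊ ?_
        rw [min_eq_left (Nat.le_ceil _)]
      · rw [Set.indicator_of_notMem hω]
        have hZ : ∀ n : ℕ, Zn n ω = 0 := by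
          intro n; simp [hZn_def, hind_def, Set.indicator_of_notMem hω]
        simp [hZ]
    have hY_int : Integrable (A.indicator r) Q := by
      refine ⟨hY_aesm, ?_⟩
      have hmono : ∫⁻ ω, ‖A.indicator r ω‖₊ ∂Q = ⨆ n, ∫⁻ ω, ENNReal.ofReal (Zn n ω) ∂Q := by
        rw [lintegral_congr hpt]
        refine lintegral_iSup' (fun n => ?_) ?_
        · exact (ENNReal.measurable_ofReal.comp (hZn_m n)).aemeasurable
        · refine Filter.Eventually.of_forall fun ω i j hij => ?_
          refine ENNReal.ofReal_le_ofReal ?_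
          exact mul_le_mul_of_nonneg_right
            (min_le_min le_rfl (Nat.cast_le.2 hij)) (hind_nonneg ω)
      rw [HasFiniteIntegral]; simp only [enorm_eq_nnnorm]; rw [hmono]
      refine lt_of_le_of_lt (iSup_le fun n => ?_)
        (ENNReal.ofReal_lt_top : ENNReal.ofReal (∫ ω, ‖g ω‖ ∂Q) < ⊤)
      rw [← ofReal_integral_eq_lintegral_ofReal (hZn_int n)
        (Filter.Eventually.of_forall (hZn_nonneg n))]
      exact ENNReal.ofReal_le_ofReal (hZn_integral_le n)
    -- characterization of the conditional expectation
    refine (ae_eq_condExp_of_forall_setIntegral_eq hGt_le hIX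
      (fun s _ _ => hY_int.integrableOn) ?_
      ⟨A.indicator r, hY_sm, Filter.EventuallyEq.rfl⟩).symm
    intro B hB _
    obtain ⟨C, hC, hBA⟩ := key B hB
    have hC0 : MeasurableSet[m0] C := hFt _ hC
    have hB0 : MeasurableSet[m0] B := hGt_le _ hB
    have move : ∀ f : Ω → ℝ, ∫ x in B, A.indicator f x ∂Q = ∫ x in C, A.indicator f x ∂Q := by
      intro f
      rw [← hIntInd (A.indicator f) B hB0, ← hIntInd (A.indicator f) C hC0,
        Set.indicator_indicator, Set.indicator_indicator, hBA]
    rw [move r, move X, ← hIntInd (A.indicator r) C hC0]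
    have hCr : Set.indicator C (A.indicator r) = (C.indicator r) * ind := by
      funext ω
      by_cases hωC : ω ∈ C <;> by_cases hωA : ω ∈ A <;>
        simp [Set.indicator_of_mem, Set.indicator_of_notMem, hωC, hωA, hind_def]
    have hCr_int : Integrable (C.indicator r * ind) Q := by
      rw [← hCr]; exact hIndInt C hY_int hC0
    rw [hCr, pull (C.indicator r) (hr_sm.indicator hC) hCr_int]
    have h1 : ∀ᵐ ω ∂Q, C.indicator r ω * h ω = C.indicator g ω := by
      filter_upwards [hpos] with ω hω
      by_cases hωC : ω ∈ C
      · rw [Set.indicator_of_mem hωC, Set.indicator_of_mem hωC, hr_def]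
        exact div_mul_cancel₀ _ (ne_of_gt hω)
      · simp [Set.indicator_of_notMem hωC]
    rw [integral_congr_ae h1, hIntInd g C hC0]
    exact setIntegral_condExp hFt hIX hC
  refine ⟨part1, ?_⟩
  intro X hX hXsm
  refine ⟨fun ω => (Q[A.indicator X|Ft]) ω / h ω, stronglyMeasurable_condExp.measurable.div
    (hh_sm.measurable) |>.stronglyMeasurable, ?_⟩
  have h2 : Q[A.indicator X|Gt] = A.indicator X :=
    condExp_of_stronglyMeasurable hGt_le (hXsm.indicator hA_Gt) (hIndInt A hX hA_m0)
  have h1 := part1 X hX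
  rw [h2] at h1
  exact h1
end

section
/- (Deterministic basis in models with q ≡ Id, e.g. Hull–White and Cheyette.) Fix N ≥ 1, a continuous function a : [0,∞) → ℝ^N, and set g_i(t,u) := exp(−∫_t^u a_i(v) dv) and G_0(t,T_0,T_1) := ∫_{T_0}^{T_1} g(t,s) ds ∈ ℝ^N (componentwise). Fix t ≥ 0, a tenor x > 0, T := t + x, initial values E_0, F_0 > −1/x, and for X ∈ ℝ^N and an N×N real matrix Y define E_t and F_t by the reconstruction formulas log((1/x + E_t)/(1/x + E_0)) = G_0(t,T−x,T)ᵀ(X + Y(G_0(t,t,T) − ½G_0(t,T−x,T))) and log((1/x + F_t)/(1/x + F_0)) = G_0(t,T−x,T)ᵀ(X + Y(G_0(t,t,T) − ½G_0(t,T−x,T))) (the same exponent, since the volatility deformation q is the identity and the shift is k(T,x) = 1/x). Then for all tenors 0 < x_1 < x_2 with T_i := t + x_i, the basis β_t(x_1,x_2) := (1/x_2)·log((1/x_2 + E_t(T_2,x_2))/(1/x_2 + F_t(T_2,x_2))) − (1/x_1)·log((1/x_1 + E_t(T_1,x_1))/(1/x_1 + F_t(T_1,x_1))) does not depend on (X,Y):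 it equals (1/x_2)·log((1/x_2 + E_0(T_2,x_2))/(1/x_2 + F_0(T_2,x_2))) − (1/x_1)·log((1/x_1 + E_0(T_1,x_1))/(1/x_1 + F_0(T_1,x_1))). Equivalently, the ratio (1 + x F_t)/(1 + x E_t) equals its initial value (1 + x F_0)/(1 + x E_0) for every (X,Y). -/
open Matrix

/-- Deterministic basis in multiple-curve HJM models with
`q ≡ Id` (Hull–White, Cheyette): since OIS and Libor forward rates share the
same reconstruction exponent, the basis `β_t(x₁,x₂)` does not depend on the
Markov state `(X,Y)` and equals its initial value; equivalently
`(1+xF_t)/(1+xE_t) = (1+xF₀)/(1+xE₀)`. -/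
theorem stmt_14
    {N : ℕ} (hN : 1 ≤ N)
    (a : ℝ → Fin N → ℝ) (ha : ∀ i, ContinuousOn (fun v => a v i) (Set.Ici 0))
    (g : Fin N → ℝ → ℝ → ℝ)
    (hg : ∀ i t u, g i t u = Real.exp (-(∫ v in t..u, a v i)))
    (G0 : ℝ → ℝ → ℝ → Fin N → ℝ)
    (hG0 : ∀ t T0 T1 i, G0 t T0 T1 i = ∫ s in T0..T1, g i t s)
    (t : ℝ) (ht : 0 ≤ t)
    (E0 F0 : ℝ → ℝ)
    (hE0 : ∀ x, 0 < x → -(1 / x) < E0 x) (hF0 : ∀ x, 0 < x → -(1 / x) < F0 x)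
    (Et Ft : ℝ → (Fin N → ℝ) → Matrix (Fin N) (Fin N) ℝ → ℝ)
    (hEtpos : ∀ x X Y, 0 < x → -(1 / x) < Et x X Y)
    (hFtpos : ∀ x X Y, 0 < x → -(1 / x) < Ft x X Y)
    (hEt : ∀ x X Y, 0 < x →
      Real.log ((1 / x + Et x X Y) / (1 / x + E0 x)) =
        G0 t (t + x - x) (t + x) ⬝ᵥ
          (X + Y.mulVec (G0 t t (t + x) - (1 / 2 : ℝ) • G0 t (t + x - x) (t + x))))
    (hFt : ∀ x X Y, 0 < x →
      Real.log ((1 / x + Ft x X Y) / (1 / x + F0 x)) =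
        G0 t (t + x - x) (t + x) ⬝ᵥ
          (X + Y.mulVec (G0 t t (t + x) - (1 / 2 : ℝ) • G0 t (t + x - x) (t + x)))) :
    (∀ x1 x2 : ℝ, 0 < x1 → x1 < x2 →
      ∀ (X : Fin N → ℝ) (Y : Matrix (Fin N) (Fin N) ℝ),
        (1 / x2) * Real.log ((1 / x2 + Et x2 X Y) / (1 / x2 + Ft x2 X Y))
          - (1 / x1) * Real.log ((1 / x1 + Et x1 X Y) / (1 / x1 + Ft x1 X Y))
        = (1 / x2) * Real.log ((1 / x2 + E0 x2) / (1 / x2 + F0 x2))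
          - (1 / x1) * Real.log ((1 / x1 + E0 x1) / (1 / x1 + F0 x1)))
    ∧ (∀ x : ℝ, 0 < x →
      ∀ (X : Fin N → ℝ) (Y : Matrix (Fin N) (Fin N) ℝ),
        (1 + x * Ft x X Y) / (1 + x * Et x X Y)
          = (1 + x * F0 x) / (1 + x * E0 x)) := by

  have key : ∀ x X Y, 0 < x →
      (1 / x + Et x X Y) / (1 / x + E0 x) = (1 / x + Ft x X Y) / (1 / x + F0 x) := by
    intro x X Y hx
    have hE0p : 0 < 1 / x + E0 x := by have := hE0 x hx; linarith
    have hF0p : 0 < 1 / x + F0 x := by have := hF0 x hx; linarith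
    have hEp : 0 < 1 / x + Et x X Y := by have := hEtpos x X Y hx; linarith
    have hFp : 0 < 1 / x + Ft x X Y := by have := hFtpos x X Y hx; linarith
    have hlog : Real.log ((1 / x + Et x X Y) / (1 / x + E0 x)) =
        Real.log ((1 / x + Ft x X Y) / (1 / x + F0 x)) := by
      rw [hEt x X Y hx, hFt x X Y hx]
    calc (1 / x + Et x X Y) / (1 / x + E0 x)
        = Real.exp (Real.log ((1 / x + Et x X Y) / (1 / x + E0 x))) := by
          rw [Real.exp_log (div_pos hEp hE0p)]
      _ = Real.exp (Real.log ((1 / x + Ft x X Y) / (1 / x + F0 x))) := by rw [hlog]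
      _ = (1 / x + Ft x X Y) / (1 / x + F0 x) := Real.exp_log (div_pos hFp hF0p)
  have ratio : ∀ x X Y, 0 < x →
      (1 / x + Et x X Y) / (1 / x + Ft x X Y) = (1 / x + E0 x) / (1 / x + F0 x) := by
    intro x X Y hx
    have hE0p : 0 < 1 / x + E0 x := by have := hE0 x hx; linarith
    have hF0p : 0 < 1 / x + F0 x := by have := hF0 x hx; linarith
    have hFp : 0 < 1 / x + Ft x X Y := by have := hFtpos x X Y hx; linarith
    have h := key x X Y hx
    rw [div_eq_div_iff hE0p.ne' hF0p.ne'] at h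
    rw [div_eq_div_iff hFp.ne' hF0p.ne']
    linarith
  constructor
  · intro x1 x2 hx1 hx12 X Y
    rw [ratio x1 X Y hx1, ratio x2 X Y (hx1.trans hx12)]
  · intro x hx X Y
    have hE0p : 0 < 1 / x + E0 x := by have := hE0 x hx; linarith
    have hF0p : 0 < 1 / x + F0 x := by have := hF0 x hx; linarith
    have hEp : 0 < 1 / x + Et x X Y := by have := hEtpos x X Y hx; linarith
    have h := key x X Y hx
    rw [div_eq_div_iff hE0p.ne' hF0p.ne'] at h
    have h1 : 1 + x * Ft x X Y = x * (1 / x + Ft x X Y) := by field_simp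
    have h2 : 1 + x * Et x X Y = x * (1 / x + Et x X Y) := by field_simp
    have h3 : 1 + x * F0 x = x * (1 / x + F0 x) := by field_simp
    have h4 : 1 + x * E0 x = x * (1 / x + E0 x) := by field_simp
    rw [h1, h2, h3, h4, mul_div_mul_left _ _ hx.ne', mul_div_mul_left _ _ hx.ne',
      div_eq_div_iff hEp.ne' hE0p.ne']
    linarith
end

section
/- (Stochastic basis in the Moreni–Pallavicini model.) Fix N ≥ 1, a continuous function a : [0,∞) → ℝ^N, g_i(t,u) := exp(−∫_t^u a_i(v) dv), G_0(t,T_0,T_1) := ∫_{T_0}^{T_1} g(t,s) ds, and G(t,T_0,T_1;T,x) := ∫_{T_0}^{T_1} q(s,T,x) g(t,s) ds with q(u,T,x) := diag(e^{xη_1}, …, e^{xη_N}) for a fixed vector η ∈ ℝ^N. Fix t ≥ 0, x > 0, T := t + x, a matrix Y, and initial values E_0 > −1/x, F_0 > −k with shift k = k(T,x) > 0; define E_t(X) and F_t(X) for X ∈ ℝ^N by the reconstruction formulas log((1/x+E_t)/(1/x+E_0)) = G_0(t,T−x,T)ᵀ(X + Y(G_0(t,t,T) − ½G_0(t,T−x,T)))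 and log((k+F_t)/(k+F_0)) = G(t,T−x,T;T,x)ᵀ(X + Y(G_0(t,t,T) − ½G(t,T−x,T;T,x))). If η_i ≠ 0 for some i, then G(t,T−x,T;T,x) ≠ G_0(t,T−x,T) (the i-th component differs by the nonzero quantity (e^{xη_i}−1)∫_{T−x}^T g_i(t,s) ds), and consequently the ratio X ↦ P_t(T;e)/P_t(T;x) := (1 + x F_t(X))/(1 + x E_t(X)) · (a fixed positive constant) is a non-constant function of X ∈ ℝ^N. -/
open Matrix

/-- Stochastic basis in the Moreni–Pallavicini model: with
the tenor-dependent volatility deformation `q(u,T,x) = diag(e^{xη_i})`, if some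
`η_i ≠ 0` then `G(t,T−x,T;T,x) ≠ G₀(t,T−x,T)` (the `i`-th components differ by
`(e^{xη_i}−1)∫_{T−x}^T g_i(t,s) ds ≠ 0`), and consequently the ratio
`X ↦ P_t(T;e)/P_t(T;x) = (1+xF_t(X))/(1+xE_t(X)) · const` is a non-constant
function of the Markov state `X`. -/
theorem stmt_15
    {N : ℕ} (hN : 1 ≤ N)
    (a : ℝ → Fin N → ℝ) (ha : ∀ i, ContinuousOn (fun v => a v i) (Set.Ici 0))
    (η : Fin N → ℝ)
    (g : Fin N → ℝ → ℝ → ℝ)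
    (hg : ∀ i t u, g i t u = Real.exp (-(∫ v in t..u, a v i)))
    (G0 : ℝ → ℝ → ℝ → Fin N → ℝ)
    (hG0 : ∀ t T0 T1 i, G0 t T0 T1 i = ∫ s in T0..T1, g i t s)
    (G : ℝ → ℝ → ℝ → ℝ → ℝ → Fin N → ℝ)
    (hG : ∀ t T0 T1 T x i, G t T0 T1 T x i = ∫ s in T0..T1, Real.exp (x * η i) * g i t s)
    (t x : ℝ) (ht : 0 ≤ t) (hx : 0 < x)
    (Y : Matrix (Fin N) (Fin N) ℝ)
    (E0 F0 k : ℝ) (hk : 0 < k) (hE0 : -(1 / x) < E0) (hF0 : -k < F0)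
    (Et Ft : (Fin N → ℝ) → ℝ)
    (hEtpos : ∀ X, -(1 / x) < Et X)
    (hFtpos : ∀ X, -k < Ft X)
    (hEt : ∀ X,
      Real.log ((1 / x + Et X) / (1 / x + E0)) =
        G0 t (t + x - x) (t + x) ⬝ᵥ
          (X + Y.mulVec (G0 t t (t + x) - (1 / 2 : ℝ) • G0 t (t + x - x) (t + x))))
    (hFt : ∀ X,
      Real.log ((k + Ft X) / (k + F0)) =
        G t (t + x - x) (t + x) (t + x) x ⬝ᵥ
          (X + Y.mulVec (G0 t t (t + x) -
            (1 / 2 : ℝ) • G t (t + x - x) (t + x) (t + x) x)))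
    (i : Fin N) (hηi : η i ≠ 0) :
    (G t (t + x - x) (t + x) (t + x) x ≠ G0 t (t + x - x) (t + x)
      ∧ G t (t + x - x) (t + x) (t + x) x i - G0 t (t + x - x) (t + x) i
          = (Real.exp (x * η i) - 1) * ∫ s in (t + x - x)..(t + x), g i t s
      ∧ (Real.exp (x * η i) - 1) * (∫ s in (t + x - x)..(t + x), g i t s) ≠ 0)
    ∧ (∀ c : ℝ, 0 < c →
        ¬ ∃ ρ : ℝ, ∀ X : Fin N → ℝ,
          c * ((1 + x * Ft X) / (1 + x * Et X)) = ρ) := by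
  have htx : t + x - x = t := by ring
  simp only [htx] at hEt hFt ⊢
  have hsub : Set.uIcc t (t + x) ⊆ Set.Ici (0:ℝ) := by
    rw [Set.uIcc_of_le (by linarith)]
    intro s hs
    exact le_trans ht hs.1
  have hprim : ContinuousOn (fun s => ∫ v in t..s, a v i) (Set.uIcc t (t + x)) :=
    intervalIntegral.continuousOn_primitive_interval
      (((ha i).mono hsub).integrableOn_compact (isCompact_uIcc))
  have hgcont : ContinuousOn (fun s => g i t s) (Set.uIcc t (t + x)) := by
    have h1 : ContinuousOn (fun s => Real.exp (-(∫ v in t..s, a v i))) (Set.uIcc t (t + x)) :=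
      Real.continuous_exp.comp_continuousOn hprim.neg
    intro s hs
    simpa [hg] using h1 s hs
  have hgint : IntervalIntegrable (fun s => g i t s) MeasureTheory.volume t (t + x) :=
    hgcont.intervalIntegrable
  have hIpos : 0 < ∫ s in t..(t + x), g i t s := by
    apply intervalIntegral.intervalIntegral_pos_of_pos_on hgint
    · intro s _
      rw [hg]
      exact Real.exp_pos _
    · linarith
  have hGi : G t t (t + x) (t + x) x i = Real.exp (x * η i) * ∫ s in t..(t + x), g i t s := by
    rw [hG]
    exact intervalIntegral.integral_const_mul _ _
  have hdiff : G t t (t + x) (t + x) x i - G0 t t (t + x) i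
      = (Real.exp (x * η i) - 1) * ∫ s in t..(t + x), g i t s := by
    rw [hGi, hG0]; ring
  have hexpne : Real.exp (x * η i) ≠ 1 := by
    intro h
    exact mul_ne_zero hx.ne' hηi (Real.exp_injective (h.trans Real.exp_zero.symm))
  have hfacne : (Real.exp (x * η i) - 1) * (∫ s in t..(t + x), g i t s) ≠ 0 :=
    mul_ne_zero (sub_ne_zero.mpr hexpne) hIpos.ne'
  have hGne : G t t (t + x) (t + x) x ≠ G0 t t (t + x) := by
    intro h
    apply hfacne
    rw [← hdiff, h, sub_self]
  refine ⟨⟨hGne, hdiff, hfacne⟩, ?_⟩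
  intro c hc ⟨ρ, hρ⟩
  set v0 : Fin N → ℝ := G0 t t (t + x) with hv0
  set v1 : Fin N → ℝ := G t t (t + x) (t + x) x with hv1
  set w0 : Fin N → ℝ := Y.mulVec (v0 - (1 / 2 : ℝ) • v0) with hw0
  set w1 : Fin N → ℝ := Y.mulVec (v0 - (1 / 2 : ℝ) • v1) with hw1
  have hE0' : 0 < 1 / x + E0 := by linarith
  have hF0' : 0 < k + F0 := by linarith
  have hEexp : ∀ X, 1 / x + Et X = (1 / x + E0) * Real.exp (v0 ⬝ᵥ (X + w0)) := by
    intro X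
    have hpos : 0 < (1 / x + Et X) / (1 / x + E0) :=
      div_pos (by linarith [hEtpos X]) hE0'
    have h := Real.exp_log hpos
    rw [hEt X] at h
    rw [eq_div_iff hE0'.ne'] at h
    linarith [h]
  have hFexp : ∀ X, k + Ft X = (k + F0) * Real.exp (v1 ⬝ᵥ (X + w1)) := by
    intro X
    have hpos : 0 < (k + Ft X) / (k + F0) :=
      div_pos (by linarith [hFtpos X]) hF0'
    have h := Real.exp_log hpos
    rw [hFt X] at h
    rw [eq_div_iff hF0'.ne'] at h
    linarith [h]
  have hkey : ∀ X, c * (1 - x * k + x * (k + F0) * Real.exp (v1 ⬝ᵥ (X + w1)))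
      = ρ * (x * (1 / x + E0) * Real.exp (v0 ⬝ᵥ (X + w0))) := by
    intro X
    have hE1 : 1 + x * Et X = x * (1 / x + E0) * Real.exp (v0 ⬝ᵥ (X + w0)) := by
      have h := hEexp X
      have hx1 : x * (1 / x) = 1 := by field_simp
      nlinarith [h]
    have hF1 : 1 + x * Ft X = 1 - x * k + x * (k + F0) * Real.exp (v1 ⬝ᵥ (X + w1)) := by
      have h := hFexp X
      nlinarith [h]
    have hEpos : 0 < 1 + x * Et X := by
      rw [hE1]
      positivity
    have h := hρ X
    rw [← mul_div_assoc, div_eq_iff hEpos.ne'] at h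
    rw [← hE1, ← hF1]
    linarith [h]
  have hdot : ∀ (s : ℝ) (v w : Fin N → ℝ),
      v ⬝ᵥ (Pi.single i s + w) = v i * s + v ⬝ᵥ w := by
    intro s v w
    rw [dotProduct_add, dotProduct_single]
  set u : ℝ := v1 i with hu
  set z : ℝ := v0 i with hz
  have huz : u ≠ z := by
    intro h
    apply hfacne
    rw [← hdiff]
    exact sub_eq_zero.mpr h
  have huene : Real.exp u ≠ Real.exp z := fun h => huz (Real.exp_injective h)
  have hu0 : 0 < u := by
    rw [hGi]
    positivity
  have hue1 : Real.exp u ≠ 1 := by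
    intro h
    exact hu0.ne' (Real.exp_injective (h.trans Real.exp_zero.symm))
  set D : ℝ := c * (1 - x * k) with hD
  set p : ℝ := c * (x * (k + F0) * Real.exp (v1 ⬝ᵥ w1)) with hp
  set q : ℝ := ρ * (x * (1 / x + E0) * Real.exp (v0 ⬝ᵥ w0)) with hq
  have hppos : 0 < p := by
    rw [hp]
    positivity
  have hkey' : ∀ s : ℝ, D + p * Real.exp (u * s) = q * Real.exp (z * s) := by
    intro s
    have h := hkey (Pi.single i s)
    rw [hdot s v1 w1, hdot s v0 w0, Real.exp_add, Real.exp_add] at h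
    rw [hD, hp, hq]
    linear_combination h
  have h0' := hkey' 0
  have h1' := hkey' 1
  have h2' := hkey' 2
  simp only [mul_zero, Real.exp_zero, mul_one] at h0' h1'
  have e2u : Real.exp (u * 2) = Real.exp u * Real.exp u := by
    rw [← Real.exp_add]; ring_nf
  have e2z : Real.exp (z * 2) = Real.exp z * Real.exp z := by
    rw [← Real.exp_add]; ring_nf
  rw [e2u, e2z] at h2'
  have hA : p * (Real.exp u - 1) = q * (Real.exp z - 1) := by linarith
  have hC : p * (Real.exp u - 1) * (Real.exp z - Real.exp u) = 0 := by
    linear_combination Real.exp z * hA - h2' + h1'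
  exact mul_ne_zero (mul_ne_zero hppos.ne' (sub_ne_zero.mpr hue1))
    (sub_ne_zero.mpr (Ne.symm huene)) hC
end
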